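/- Let ν ∈ R^r and ξ ∈ R^n be zero-mean random vectors with Σ_ξ positive definite, and let W ∈ R^{r×r}. Then the minimum of E[‖ν − B L ξ‖²_W] over L ∈ R^{c×n} and B ∈ R^{r×c} equals tr(W Σ_ν W^T) − (λ₁ + ⋯ + λ_c), where λ₁ ≥ ⋯ ≥ λ_c are the c largest eigenvalues of the PSD matrix W Σ_{νξ} Σ_ξ^{-1} Σ_{ξν} W^T. -/

import Mathlib

open Matrix


lemma exists_proj {r c : ℕ} (B₁ : Matrix (Fin r) (Fin c) ℝ) :
    ∃ P : Matrix (Fin r) (Fin r) ℝ, Pᵀ = P ∧ P * P = P ∧ P * B₁ = B₁ ∧ P.trace ≤ (c : ℝ) := by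
  classical
  set K : Submodule ℝ (EuclideanSpace ℝ (Fin r)) := LinearMap.range (Matrix.toEuclideanLin B₁)
  have hdim : Module.finrank ℝ K ≤ c := by
    have := LinearMap.finrank_range_le (Matrix.toEuclideanLin B₁)
    rwa [finrank_euclideanSpace, Fintype.card_fin] at this
  set d := Module.finrank ℝ K
  set b := stdOrthonormalBasis ℝ K
  set Q : Matrix (Fin r) (Fin d) ℝ := fun i k => ((b k : EuclideanSpace ℝ (Fin r)) : Fin r → ℝ) i with hQ
  have hQtQ : Qᵀ * Q = 1 := by
    ext k l
    rw [Matrix.mul_apply]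
    simp only [transpose_apply]
    simp only [hQ]
    have := b.orthonormal
    rw [orthonormal_iff_ite] at this
    have h2 := this k l
    rw [Submodule.coe_inner] at h2
    rw [PiLp.inner_apply] at h2
    simp only [RCLike.inner_apply, conj_trivial] at h2
    rw [Finset.sum_congr rfl fun x _ => mul_comm ((b k : EuclideanSpace ℝ (Fin r)).ofLp x) _, h2]
    by_cases h : k = l <;> simp [h, Matrix.one_apply]
  -- every column of B₁ is in the span of columns of Q
  have hcols : ∃ Y : Matrix (Fin d) (Fin c) ℝ, Q * Y = B₁ := by
    have hmem : ∀ j, (WithLp.toLp 2 (fun i => B₁ i j)) ∈ (K : Set (EuclideanSpace ℝ (Fin r))) := by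
      intro j
      refine ⟨(EuclideanSpace.equiv (Fin c) ℝ).symm (Pi.single j 1), ?_⟩
      show Matrix.toEuclideanLin B₁ _ = _
      simp [Matrix.toEuclideanLin_apply]
      ext i
      simp [Matrix.mulVec_single]
    refine ⟨fun k j => b.repr ⟨(WithLp.toLp 2 (fun i => B₁ i j)), hmem j⟩ k, ?_⟩
    ext i j
    have h0 := b.sum_repr ⟨(WithLp.toLp 2 (fun i => B₁ i j)), hmem j⟩
    have h2 := congrArg (fun v : K => EuclideanSpace.proj i (v : EuclideanSpace ℝ (Fin r))) h0
    simp only [map_sum, Submodule.coe_sum, Submodule.coe_smul, _root_.map_smul] at h2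
    change (∑ k, Q i k * b.repr ⟨(WithLp.toLp 2 (fun i => B₁ i j)), hmem j⟩ k) = B₁ i j
    simp only [hQ]
    simp only [smul_eq_mul] at h2
    have h3 : ∀ k, EuclideanSpace.proj i ((b k : EuclideanSpace ℝ (Fin r))) = (b k : EuclideanSpace ℝ (Fin r)) i := fun k => rfl
    rw [Finset.sum_congr rfl (fun k _ => by rw [h3 k] : ∀ k ∈ Finset.univ, _ = b.repr ⟨(WithLp.toLp 2 (fun i => B₁ i j)), hmem j⟩ k * (b k : EuclideanSpace ℝ (Fin r)) i)] at h2
    rw [show (B₁ i j : ℝ) = EuclideanSpace.proj i ((⟨(WithLp.toLp 2 (fun i => B₁ i j)), hmem j⟩ : K) : EuclideanSpace ℝ (Fin r)) from rfl, ← h2]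
    exact Finset.sum_congr rfl (fun k _ => mul_comm _ _)
  obtain ⟨Y, hY⟩ := hcols
  refine ⟨Q * Qᵀ, ?_, ?_, ?_, ?_⟩
  · simp [Matrix.transpose_mul]
  · rw [Matrix.mul_assoc, ← Matrix.mul_assoc Qᵀ, hQtQ, Matrix.one_mul]
  · rw [← hY, ← Matrix.mul_assoc, Matrix.mul_assoc _ Qᵀ Q, hQtQ, Matrix.mul_one]
  · rw [Matrix.trace_mul_comm, hQtQ]
    simpa [Matrix.trace_one] using (Nat.cast_le.mpr hdim : (d:ℝ) ≤ c)

lemma trace_mul_transpose_nonneg {m n : ℕ} (X : Matrix (Fin m) (Fin n) ℝ) :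
    0 ≤ (X * Xᵀ).trace := by
  rw [Matrix.trace]
  refine Finset.sum_nonneg fun i _ => ?_
  rw [Matrix.diag_apply, Matrix.mul_apply]
  exact Finset.sum_nonneg fun k _ => by simp [Matrix.transpose_apply, mul_self_nonneg]

lemma kyfan_comb {r c : ℕ} (lam q : Fin r → ℝ) (S : Finset (Fin r))
    (hS : S.card = c) (hlam : ∀ i, 0 ≤ lam i)
    (hq0 : ∀ i, 0 ≤ q i) (hq1 : ∀ i, q i ≤ 1) (hqs : ∑ i, q i ≤ (c : ℝ))
    (hmax : ∀ j ∉ S, ∀ i ∈ S, lam j ≤ lam i) :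
    ∑ i, lam i * q i ≤ ∑ i ∈ S, lam i := by
  classical
  rcases S.eq_empty_or_nonempty with hE | hne
  · subst hE
    simp only [Finset.card_empty] at hS
    subst hS
    have hz : ∀ i, q i = 0 := by
      intro i
      have h1 : ∑ i, q i = 0 := le_antisymm (by simpa using hqs) (Finset.sum_nonneg fun i _ => hq0 i)
      have := (Finset.sum_eq_zero_iff_of_nonneg (fun i _ => hq0 i)).mp h1
      exact this i (Finset.mem_univ i)
    simp [hz]
  · set t := S.inf' hne lam with ht
    have htpos : 0 ≤ t := Finset.le_inf' hne lam fun i _ => hlam i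
    have htle : ∀ i ∈ S, t ≤ lam i := fun i hi => Finset.inf'_le lam hi
    have htge : ∀ j ∉ S, lam j ≤ t := fun j hj =>
      Finset.le_inf' hne lam fun i hi => hmax j hj i hi
    have hsplit : ∑ i, lam i * q i = ∑ i ∈ S, lam i * q i + ∑ i ∈ Sᶜ, lam i * q i :=
      (Finset.sum_add_sum_compl S _).symm
    have h1 : ∑ i ∈ Sᶜ, lam i * q i ≤ t * ∑ i ∈ Sᶜ, q i := by
      rw [Finset.mul_sum]
      exact Finset.sum_le_sum fun i hi =>
        mul_le_mul_of_nonneg_right (htge i (by simpa using hi)) (hq0 i)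
    have h2 : ∑ i ∈ Sᶜ, q i ≤ ∑ i ∈ S, (1 - q i) := by
      have : ∑ i ∈ S, q i + ∑ i ∈ Sᶜ, q i = ∑ i, q i := Finset.sum_add_sum_compl S q
      have hc : ∑ i ∈ S, (1 - q i) = (c : ℝ) - ∑ i ∈ S, q i := by
        rw [Finset.sum_sub_distrib]
        simp [hS]
      rw [hc]
      linarith
    have h3 : t * ∑ i ∈ S, (1 - q i) ≤ ∑ i ∈ S, lam i * (1 - q i) := by
      rw [Finset.mul_sum]
      exact Finset.sum_le_sum fun i hi =>
        mul_le_mul_of_nonneg_right (htle i hi) (by linarith [hq1 i])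
    have h4 : ∑ i ∈ S, lam i * q i + ∑ i ∈ S, lam i * (1 - q i) = ∑ i ∈ S, lam i := by
      rw [← Finset.sum_add_distrib]
      exact Finset.sum_congr rfl fun i _ => by ring
    calc ∑ i, lam i * q i = ∑ i ∈ S, lam i * q i + ∑ i ∈ Sᶜ, lam i * q i := hsplit
      _ ≤ ∑ i ∈ S, lam i * q i + t * ∑ i ∈ Sᶜ, q i := by linarith
      _ ≤ ∑ i ∈ S, lam i * q i + t * ∑ i ∈ S, (1 - q i) := by nlinarith
      _ ≤ ∑ i ∈ S, lam i * q i + ∑ i ∈ S, lam i * (1 - q i) := by linarith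
      _ = ∑ i ∈ S, lam i := h4

lemma sSup_top {r c : ℕ} (lam : Fin r → ℝ) (hc : c ≤ r) :
    ∃ S : Finset (Fin r), S.card = c ∧
      sSup {s | ∃ S : Finset (Fin r), S.card = c ∧ s = ∑ i ∈ S, lam i} = ∑ i ∈ S, lam i ∧
      (∀ T : Finset (Fin r), T.card = c → ∑ i ∈ T, lam i ≤ ∑ i ∈ S, lam i) := by
  classical
  set F := (Finset.powersetCard c (Finset.univ : Finset (Fin r))).image (fun S => ∑ i ∈ S, lam i)
    with hF
  have hne : F.Nonempty := by
    refine Finset.Nonempty.image ?_ _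
    rw [Finset.powersetCard_nonempty]
    simpa using hc
  have hset : {s | ∃ S : Finset (Fin r), S.card = c ∧ s = ∑ i ∈ S, lam i} = (F : Set ℝ) := by
    ext s
    simp only [Set.mem_setOf_eq, hF, Finset.coe_image, Set.mem_image, Finset.mem_coe,
      Finset.mem_powersetCard_univ]
    constructor
    · rintro ⟨S, h1, h2⟩; exact ⟨S, h1, h2.symm⟩
    · rintro ⟨S, h1, h2⟩; exact ⟨S, h1, h2.symm⟩
  obtain ⟨S, hSmem, hSval⟩ := Finset.mem_image.mp (F.max'_mem hne)
  rw [Finset.mem_powersetCard_univ] at hSmem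
  refine ⟨S, hSmem, ?_, ?_⟩
  · rw [hset, hne.csSup_eq_max', hSval]
  · intro T hT
    rw [hSval]
    exact F.le_max' _ (Finset.mem_image.mpr ⟨T, Finset.mem_powersetCard_univ.mpr hT, rfl⟩)

lemma exchange {r c : ℕ} (lam : Fin r → ℝ) (S : Finset (Fin r)) (hS : S.card = c)
    (hbest : ∀ T : Finset (Fin r), T.card = c → ∑ i ∈ T, lam i ≤ ∑ i ∈ S, lam i) :
    ∀ j ∉ S, ∀ i ∈ S, lam j ≤ lam i := by
  classical
  intro j hj i hi
  set T := insert j (S.erase i) with hT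
  have hjT : j ∉ S.erase i := fun h => hj (Finset.mem_of_mem_erase h)
  have hTcard : T.card = c := by
    have h1 : 1 ≤ c := hS ▸ Finset.card_pos.mpr ⟨i, hi⟩
    rw [hT, Finset.card_insert_of_notMem hjT, Finset.card_erase_of_mem hi, hS]
    omega
  have hsum : ∑ k ∈ T, lam k = lam j + (∑ k ∈ S, lam k - lam i) := by
    rw [hT, Finset.sum_insert hjT, Finset.sum_erase_eq_sub hi]
  have := hbest T hTcard
  rw [hsum] at this
  linarith


set_option maxHeartbeats 1000000 in
/-- Reduced-rank (canonical correlation) regression: with `Sxi ≻ 0`, the minimum of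
`E[‖ν − B L ξ‖²_W] = tr(W Snu Wᵀ) − 2 tr(W B L Sxinu Wᵀ) + tr(W B L Sxi Lᵀ Bᵀ Wᵀ)` over
`L ∈ R^{c×n}` and `B ∈ R^{r×c}` equals `tr(W Snu Wᵀ)` minus the sum of the `c` largest
eigenvalues of `W Snuxi Sxi⁻¹ Sxinu Wᵀ` (the sum of the `c` largest eigenvalues being
the maximum over cardinality-`c` subsets of eigenvalues). -/
theorem stmt9 {r n c : ℕ} (hc : c ≤ min r n)
    (Snu : Matrix (Fin r) (Fin r) ℝ) (Snuxi : Matrix (Fin r) (Fin n) ℝ)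
    (Sxi : Matrix (Fin n) (Fin n) ℝ) (hSxi : Sxi.PosDef)
    (W : Matrix (Fin r) (Fin r) ℝ)
    (hM : (W * Snuxi * Sxi⁻¹ * Snuxiᵀ * Wᵀ).IsHermitian)
    (f : Matrix (Fin c) (Fin n) ℝ → Matrix (Fin r) (Fin c) ℝ → ℝ)
    (hf : ∀ L B, f L B = (W * Snu * Wᵀ).trace - 2 * (W * B * L * Snuxiᵀ * Wᵀ).trace
        + (W * B * L * Sxi * Lᵀ * Bᵀ * Wᵀ).trace) :
    IsLeast {d | ∃ (L : Matrix (Fin c) (Fin n) ℝ) (B : Matrix (Fin r) (Fin c) ℝ), d = f L B}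
      ((W * Snu * Wᵀ).trace -
        sSup {s | ∃ S : Finset (Fin r), S.card = c ∧ s = ∑ i ∈ S, hM.eigenvalues i}) := by
  classical
  have hconj : ∀ {a b : ℕ} (A : Matrix (Fin a) (Fin b) ℝ), Aᴴ = Aᵀ := by
    intro a b A; ext i j; simp [conjTranspose_apply]
  set M := W * Snuxi * Sxi⁻¹ * Snuxiᵀ * Wᵀ with hMdef
  set lam := hM.eigenvalues with hlamdef
  set T0 := (W * Snu * Wᵀ).trace with hT0
  -- basic facts about Sxi and its square root
  have hdet : IsUnit Sxi.det := (Matrix.isUnit_iff_isUnit_det Sxi).mp hSxi.isUnit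
  obtain ⟨R, hRR, hRsym⟩ : ∃ R : Matrix (Fin n) (Fin n) ℝ, R * R = Sxi ∧ Rᵀ = R := by
    open scoped MatrixOrder in
    exact ⟨CFC.sqrt Sxi, CFC.sqrt_mul_sqrt_self Sxi hSxi.posSemidef.nonneg,
      by rw [← hconj]; exact (CFC.sqrt_nonneg Sxi).posSemidef.1⟩
  have hRdetU : IsUnit R.det := by
    have : R.det * R.det = Sxi.det := by rw [← Matrix.det_mul, hRR]
    exact isUnit_of_mul_isUnit_left (this ▸ hdet)
  have hRiR : R⁻¹ * R = 1 := Matrix.nonsing_inv_mul R hRdetU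
  have hRRi : R * R⁻¹ = 1 := Matrix.mul_nonsing_inv R hRdetU
  have hSxiInv : Sxi⁻¹ = R⁻¹ * R⁻¹ := by rw [← hRR, Matrix.mul_inv_rev]
  have hSxiSym : Sxiᵀ = Sxi := by rw [← hconj Sxi]; exact hSxi.1
  have hSxiInvSym : Sxi⁻¹ᵀ = Sxi⁻¹ := by rw [Matrix.transpose_nonsing_inv, hSxiSym]
  have hRinvSym : R⁻¹ᵀ = R⁻¹ := by rw [Matrix.transpose_nonsing_inv, hRsym]
  have hSiR : Sxi⁻¹ * R = R⁻¹ := by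
    rw [hSxiInv, Matrix.mul_assoc, hRiR, Matrix.mul_one]
  -- G and G₀
  set G := W * Snuxi * Sxi⁻¹ with hGdef
  set G₀ := W * Snuxi * R⁻¹ with hG0def
  have hGR : G * R = G₀ := by rw [hGdef, hG0def, Matrix.mul_assoc, hSiR]
  have hM0 : G₀ * G₀ᵀ = M := by
    rw [hMdef, hGdef, hG0def]
    simp only [Matrix.transpose_mul, hRinvSym, Matrix.mul_assoc, hSxiInv]
  have hGS : G * (Snuxiᵀ * Wᵀ) = M := by
    rw [hMdef, hGdef]
    simp only [Matrix.mul_assoc]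
  have hGSG : G * Sxi * Gᵀ = M := by
    rw [hMdef, hGdef]
    simp only [Matrix.transpose_mul, hSxiInvSym, Matrix.mul_assoc]
    rw [Matrix.nonsing_inv_mul_cancel_left Sxi _ hdet]
  -- spectral decomposition
  set U : Matrix (Fin r) (Fin r) ℝ := (hM.eigenvectorUnitary : Matrix (Fin r) (Fin r) ℝ) with hU
  have hUtU : Uᵀ * U = 1 := by
    have := (Matrix.mem_unitaryGroup_iff').mp hM.eigenvectorUnitary.2
    rwa [← hconj U, ← Matrix.star_eq_conjTranspose]
  have hUUt : U * Uᵀ = 1 := by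
    have h := (Matrix.mem_unitaryGroup_iff).mp hM.eigenvectorUnitary.2
    rw [Matrix.star_eq_conjTranspose, hconj] at h
    exact h
  set D := Matrix.diagonal lam with hD
  have hspec : M = U * D * Uᵀ := by
    have := hM.spectral_theorem
    rw [RCLike.ofReal_real_eq_id, Function.id_comp, Unitary.conjStarAlgAut_apply, Matrix.star_eq_conjTranspose, hconj] at this
    exact this
  have hMU : M * U = U * D := by
    rw [hspec, Matrix.mul_assoc, Matrix.mul_assoc, hUtU, Matrix.mul_one]
  have hlam0 : ∀ i, 0 ≤ lam i := by
    have hpsd : M.PosSemidef := by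
      rw [← hM0, ← hconj G₀]
      exact Matrix.posSemidef_self_mul_conjTranspose G₀
    exact fun i => hpsd.eigenvalues_nonneg i
  -- the best cardinality-c subset
  obtain ⟨S, hScard, hSval, hSbest⟩ := sSup_top lam (hc.trans (min_le_left r n))
  have hSmax : ∀ j ∉ S, ∀ i ∈ S, lam j ≤ lam i := exchange lam S hScard hSbest
  rw [hSval]
  set m := ∑ i ∈ S, lam i with hm
  -- key trace identity
  have key : ∀ (L : Matrix (Fin c) (Fin n) ℝ) (B : Matrix (Fin r) (Fin c) ℝ),
      f L B = T0 - M.trace + ((W * B * L - G) * Sxi * (W * B * L - G)ᵀ).trace := by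
    intro L B
    set A := W * B * L with hA
    have e0 : W * B * L * Sxi * Lᵀ * Bᵀ * Wᵀ = A * Sxi * Aᵀ := by
      rw [hA]; simp only [Matrix.transpose_mul, Matrix.mul_assoc]
    have e1 : (A - G) * Sxi * (A - G)ᵀ
        = A * Sxi * Aᵀ - G * Sxi * Aᵀ - (A * Sxi * Gᵀ - G * Sxi * Gᵀ) := by
      simp only [Matrix.transpose_sub, Matrix.sub_mul, Matrix.mul_sub]
    have e2 : (G * Sxi * Aᵀ).trace = (A * Sxi * Gᵀ).trace := by
      rw [← Matrix.trace_transpose (G * Sxi * Aᵀ)]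
      congr 1
      simp only [Matrix.transpose_mul, Matrix.transpose_transpose, hSxiSym, Matrix.mul_assoc]
    have e3 : (A * Sxi * Gᵀ).trace = (A * (Snuxiᵀ * Wᵀ)).trace := by
      congr 1
      rw [hGdef]
      simp only [Matrix.transpose_mul, hSxiInvSym, Matrix.mul_assoc]
      rw [Matrix.mul_nonsing_inv_cancel_left Sxi _ hdet]
    have e4 : (W * B * L * Snuxiᵀ * Wᵀ) = A * (Snuxiᵀ * Wᵀ) := by
      rw [hA]; simp only [Matrix.mul_assoc]
    have e5 : (G * Sxi * Gᵀ).trace = M.trace := by rw [hGSG]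
    rw [hf, e0, e4, e1]
    simp only [Matrix.trace_sub]
    rw [e2, e3, e5]
    ring
  have hcancel : ∀ {k : ℕ} (Z : Matrix (Fin r) (Fin k) ℝ), Uᵀ * (U * Z) = Z := by
    intro k Z
    rw [← Matrix.mul_assoc, hUtU, Matrix.one_mul]
  constructor
  · -- membership : explicit optimal L, B
    set ee : Fin c → Fin r := fun k => ((S.orderIsoOfFin hScard) k : Fin r) with hee
    have heS : ∀ k, ee k ∈ S := fun k => ((S.orderIsoOfFin hScard) k).2
    set dp : Fin r → ℝ := fun i => if i ∈ S ∧ lam i ≠ 0 then 1 else 0 with hdp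
    set Dp : Matrix (Fin r) (Fin r) ℝ := Matrix.diagonal dp with hDp
    have hDpT : Dpᵀ = Dp := by rw [hDp, Matrix.diagonal_transpose]
    set Jb : Matrix (Fin r) (Fin c) ℝ :=
      fun i k => if i = ee k ∧ lam i ≠ 0 then (lam i)⁻¹ else 0 with hJb
    set Jl : Matrix (Fin c) (Fin r) ℝ := fun k i => if i = ee k then 1 else 0 with hJl
    set N := Snuxi * Sxi⁻¹ * Snuxiᵀ * Wᵀ with hN
    have hWN : W * N = M := by
      rw [hMdef, hGdef, hN]
      simp only [Matrix.mul_assoc]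
    set Bs := N * U * Jb with hBs
    set Ls := Jl * (Uᵀ * G) with hLs
    -- the key diagonal identity
    have hDJ : D * Jb * Jl = Dp := by
      ext i j
      have hentry : (D * Jb * Jl) i j = ∑ k, lam i * Jb i k * Jl k j := by
        rw [Matrix.mul_apply]
        refine Finset.sum_congr rfl fun k _ => ?_
        rw [hD, Matrix.diagonal_mul]
      rw [hentry, hDp]
      by_cases hiS : i ∈ S
      · set k₀ := (S.orderIsoOfFin hScard).symm ⟨i, hiS⟩ with hk₀
        have hek₀ : ee k₀ = i := by
          rw [hee, hk₀]
          simp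
        rw [Finset.sum_eq_single k₀]
        · simp only [hJb, hJl]
          rw [hek₀]
          by_cases hl : lam i = 0
          · simp [hl, Matrix.diagonal_apply, hdp]
          · by_cases hij : j = i
            · subst hij
              simp [hl, Matrix.diagonal_apply, hdp, hiS, mul_inv_cancel₀ hl]
            · simp [hl, Matrix.diagonal_apply, hdp, hij, Ne.symm hij]
        · intro k _ hk
          have hne : i ≠ ee k := by
            intro h
            apply hk
            have h2 : (S.orderIsoOfFin hScard) k = ⟨i, hiS⟩ := Subtype.ext (by rw [hee] at h; exact h.symm)
            rw [hk₀, ← h2, OrderIso.symm_apply_apply]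
          simp only [hJb]
          simp [hne]
        · intro h
          exact absurd (Finset.mem_univ k₀) h
      · rw [Finset.sum_eq_zero, eq_comm]
        · have hdpi : dp i = 0 := by rw [hdp]; simp [hiS]
          rcases eq_or_ne i j with h | h
          · subst h; simp [Matrix.diagonal_apply, hdpi]
          · simp [Matrix.diagonal_apply_ne _ h]
        · intro k _
          have hne : i ≠ ee k := fun h => hiS (h ▸ heS k)
          simp only [hJb]
          simp [hne]
    have hWB : W * Bs = U * D * Jb := by
      rw [hBs]
      simp only [← Matrix.mul_assoc]
      rw [hWN, hMU]
    have hAstar : W * Bs * Ls = U * Dp * Uᵀ * G := by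
      rw [hWB, hLs]
      simp only [← Matrix.mul_assoc]
      rw [show U * D * Jb * Jl = U * (D * Jb * Jl) by simp only [Matrix.mul_assoc], hDJ]
    have hsum1 : ∑ i, dp i * lam i = m := by
      rw [hm]
      have hpt : ∀ i, dp i * lam i = if i ∈ S then lam i else 0 := by
        intro i
        rw [hdp]
        by_cases h1 : i ∈ S
        · by_cases h2 : lam i = 0 <;> simp [h1, h2]
        · simp [h1]
      rw [Finset.sum_congr rfl fun i _ => hpt i, Finset.sum_ite_mem, Finset.univ_inter]
    have hsum2 : ∑ i, dp i * (lam i * dp i) = m := by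
      rw [hm]
      have hpt : ∀ i, dp i * (lam i * dp i) = if i ∈ S then lam i else 0 := by
        intro i
        rw [hdp]
        by_cases h1 : i ∈ S
        · by_cases h2 : lam i = 0 <;> simp [h1, h2]
        · simp [h1]
      rw [Finset.sum_congr rfl fun i _ => hpt i, Finset.sum_ite_mem, Finset.univ_inter]
    have t1 : (W * Bs * Ls * Snuxiᵀ * Wᵀ).trace = m := by
      have h1 : W * Bs * Ls * Snuxiᵀ * Wᵀ = U * (Dp * (D * Uᵀ)) := by
        rw [hAstar]
        simp only [Matrix.mul_assoc]
        rw [hGS, hspec]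
        simp only [Matrix.mul_assoc]
        rw [hcancel]
      rw [h1, Matrix.trace_mul_comm]
      simp only [Matrix.mul_assoc]
      rw [hUtU, Matrix.mul_one, hD, hDp, Matrix.diagonal_mul_diagonal, Matrix.trace_diagonal]
      exact hsum1
    have t2 : (W * Bs * Ls * Sxi * Lsᵀ * Bsᵀ * Wᵀ).trace = m := by
      have e0' : W * Bs * Ls * Sxi * Lsᵀ * Bsᵀ * Wᵀ
          = (W * Bs * Ls) * Sxi * (W * Bs * Ls)ᵀ := by
        simp only [Matrix.transpose_mul, Matrix.mul_assoc]
      rw [e0', hAstar]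
      have h2 : (U * Dp * Uᵀ * G) * Sxi * (U * Dp * Uᵀ * G)ᵀ
          = U * (Dp * (D * (Dp * Uᵀ))) := by
        simp only [Matrix.transpose_mul, Matrix.transpose_transpose, hDpT, Matrix.mul_assoc]
        rw [show G * (Sxi * (Gᵀ * (U * (Dp * Uᵀ)))) = (G * Sxi * Gᵀ) * (U * (Dp * Uᵀ)) by
          simp only [Matrix.mul_assoc]]
        rw [hGSG, hspec]
        simp only [Matrix.mul_assoc]
        rw [hcancel, hcancel]
      rw [h2, Matrix.trace_mul_comm]
      simp only [Matrix.mul_assoc]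
      rw [hUtU, Matrix.mul_one, hD, hDp, Matrix.diagonal_mul_diagonal,
        Matrix.diagonal_mul_diagonal, Matrix.trace_diagonal]
      exact hsum2
    refine ⟨Ls, Bs, ?_⟩
    rw [hf Ls Bs, t1, t2]
    ring
  · -- lower bound
    rintro d ⟨L, B, rfl⟩
    rw [key L B]
    set A := W * B * L with hA
    obtain ⟨P, hPsym, hPP, hPB, hPtr⟩ := exists_proj (W * B)
    set X := A * R - G₀ with hX
    have hPAR : P * (A * R) = A * R := by
      have : A * R = (W * B) * (L * R) := by rw [hA]; simp only [Matrix.mul_assoc]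
      rw [this, ← Matrix.mul_assoc, hPB]
    have hXX : (A - G) * Sxi * (A - G)ᵀ = X * Xᵀ := by
      have h1 : (A - G) * R = X := by rw [Matrix.sub_mul, hGR, hX]
      rw [← hRR, ← Matrix.mul_assoc ((A - G)) R R, ← h1]
      rw [Matrix.transpose_mul, hRsym]
      simp only [Matrix.mul_assoc]
    -- decompose trace along P
    set Q1 := (1 : Matrix (Fin r) (Fin r) ℝ) - P with hQ1
    have hQ1sym : Q1ᵀ = Q1 := by rw [hQ1, Matrix.transpose_sub, Matrix.transpose_one, hPsym]
    have hQ1P : Q1 * Q1 = Q1 := by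
      rw [hQ1]
      simp only [Matrix.sub_mul, Matrix.mul_sub, Matrix.one_mul, Matrix.mul_one, hPP]
      abel
    have hsplit : (X * Xᵀ).trace
        = ((P * X) * (P * X)ᵀ).trace + ((Q1 * X) * (Q1 * X)ᵀ).trace := by
      have c1 : ((P * X) * (P * X)ᵀ).trace = (X * Xᵀ * P).trace := by
        rw [Matrix.transpose_mul, hPsym]
        rw [show P * X * (Xᵀ * P) = P * (X * Xᵀ * P) by simp only [Matrix.mul_assoc]]
        rw [Matrix.trace_mul_comm P, Matrix.mul_assoc, hPP]
      have c2 : ((Q1 * X) * (Q1 * X)ᵀ).trace = (X * Xᵀ * Q1).trace := by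
        rw [Matrix.transpose_mul, hQ1sym]
        rw [show Q1 * X * (Xᵀ * Q1) = Q1 * (X * Xᵀ * Q1) by simp only [Matrix.mul_assoc]]
        rw [Matrix.trace_mul_comm Q1, Matrix.mul_assoc, hQ1P]
      rw [c1, c2, hQ1, Matrix.mul_sub, Matrix.mul_one, Matrix.trace_sub]
      ring
    have hQ1X : Q1 * X = -(Q1 * G₀) := by
      have hPX : P * X = A * R - P * G₀ := by rw [hX, Matrix.mul_sub, hPAR]
      have h1 : Q1 * X = X - P * X := by rw [hQ1, Matrix.sub_mul, Matrix.one_mul]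
      have h2 : Q1 * G₀ = G₀ - P * G₀ := by rw [hQ1, Matrix.sub_mul, Matrix.one_mul]
      rw [h1, h2, hPX, hX]
      abel
    have hQ1G : ((Q1 * G₀) * (Q1 * G₀)ᵀ).trace = M.trace - (P * M).trace := by
      rw [Matrix.transpose_mul, hQ1sym]
      rw [show Q1 * G₀ * (G₀ᵀ * Q1) = Q1 * (G₀ * G₀ᵀ) * Q1 by simp only [Matrix.mul_assoc]]
      rw [hM0, Matrix.trace_mul_comm, ← Matrix.mul_assoc, hQ1P, hQ1, Matrix.sub_mul,
        Matrix.one_mul, Matrix.trace_sub]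
    have htrPM : (P * M).trace ≤ m := by
      have hqform : Uᵀ * P * U = (P * U)ᵀ * (P * U) := by
        rw [Matrix.transpose_mul, hPsym]
        rw [show Uᵀ * P * (P * U) = Uᵀ * (P * P) * U by simp only [Matrix.mul_assoc], hPP]
      have hdiag : ∀ (Z : Matrix (Fin r) (Fin r) ℝ) (i : Fin r), (Zᵀ * Z) i i = ∑ k, Z k i * Z k i := by
        intro Z i
        rw [Matrix.mul_apply]
        exact Finset.sum_congr rfl fun k _ => by rw [Matrix.transpose_apply]
      have hq0 : ∀ i, 0 ≤ (Uᵀ * P * U) i i := by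
        intro i
        rw [hqform, hdiag]
        exact Finset.sum_nonneg fun k _ => mul_self_nonneg _
      have hq1 : ∀ i, (Uᵀ * P * U) i i ≤ 1 := by
        intro i
        have hqform2 : Uᵀ * Q1 * U = (Q1 * U)ᵀ * (Q1 * U) := by
          rw [Matrix.transpose_mul, hQ1sym]
          rw [show Uᵀ * Q1 * (Q1 * U) = Uᵀ * (Q1 * Q1) * U by simp only [Matrix.mul_assoc], hQ1P]
        have hnn : 0 ≤ (Uᵀ * Q1 * U) i i := by
          rw [hqform2, hdiag]
          exact Finset.sum_nonneg fun k _ => mul_self_nonneg _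
        have hexp : (Uᵀ * Q1 * U) i i = 1 - (Uᵀ * P * U) i i := by
          rw [hQ1, Matrix.mul_sub, Matrix.mul_one, Matrix.sub_mul, hUtU]
          simp [Matrix.sub_apply, Matrix.one_apply]
        linarith [hexp ▸ hnn]
      have hqs : ∑ i, (Uᵀ * P * U) i i ≤ (c : ℝ) := by
        have h0 : ∑ i, (Uᵀ * P * U) i i = (Uᵀ * P * U).trace := rfl
        rw [h0, Matrix.trace_mul_cycle, hUUt, Matrix.one_mul]
        exact hPtr
      have htr : (P * M).trace = ∑ i, lam i * (Uᵀ * P * U) i i := by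
        rw [hspec, show P * (U * D * Uᵀ) = P * U * D * Uᵀ by simp only [Matrix.mul_assoc]]
        rw [Matrix.trace_mul_cycle, ← Matrix.mul_assoc]
        rw [Matrix.trace]
        refine Finset.sum_congr rfl fun i _ => ?_
        rw [Matrix.diag_apply, hD, Matrix.mul_diagonal]
        exact mul_comm _ _
      rw [htr, hm]
      exact kyfan_comb lam (fun i => (Uᵀ * P * U) i i) S hScard hlam0 hq0 hq1 hqs hSmax
    have hnn1 : 0 ≤ ((P * X) * (P * X)ᵀ).trace := trace_mul_transpose_nonneg _
    have hQ1Xtr : ((Q1 * X) * (Q1 * X)ᵀ).trace = M.trace - (P * M).trace := by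
      rw [hQ1X, ← hQ1G]
      congr 1
      rw [Matrix.transpose_neg, Matrix.neg_mul, Matrix.mul_neg, neg_neg]
    rw [hXX, hsplit, hQ1Xtr]
    linarith
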